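/- Frequentist risk of the shrinkage predictor: with X ~ N(θ, σ_p), Y ~ N(θ, σ_f) independent, and q̂(X) = αX + (1−α)η + √(σ_f + α·σ_p)·Φ⁻¹(b̃), the risk E_X E_Y[b(Y−q̂(X))⁺ + h(q̂(X)−Y)⁺] equals (b+h)·√(σ_f + α²·σ_p)·G(c_τ + d_τ·(θ−η), b̃), where c_τ = √((1+α·σ_p)/(1+α²·σ_p))·Φ⁻¹(b̃)·(scaling with σ_f = 1), d_τ = −(1−α)/√(σ_f + α²·σ_p), b̃ = b/(b+h), and G(w,β) = φ(w) + w·Φ(w) − β·w. -/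

import Mathlib

open MeasureTheory ProbabilityTheory

/-- Standard normal density. -/
noncomputable def stdPdf (x : ℝ) : ℝ := Real.exp (-(x ^ 2) / 2) / Real.sqrt (2 * Real.pi)

/-- Standard normal CDF. -/
noncomputable def stdCdf (x : ℝ) : ℝ := ∫ t in Set.Iic x, stdPdf t

/-- Standard normal quantile function. -/
noncomputable def stdQuantile (p : ℝ) : ℝ := Function.invFun stdCdf p

/-- The function `G(w, β) = φ(w) + w Φ(w) - β w`. -/
noncomputable def G (w β : ℝ) : ℝ := stdPdf w + w * stdCdf w - β * w

open Real Filter Set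

lemma sqrt2pi_pos : 0 < Real.sqrt (2 * Real.pi) := Real.sqrt_pos.2 (by positivity)

lemma stdPdf_eq (x : ℝ) : stdPdf x = (Real.sqrt (2 * Real.pi))⁻¹ * Real.exp (-(1/2) * x ^ 2) := by
  rw [stdPdf]; ring_nf

lemma stdPdf_pos (x : ℝ) : 0 < stdPdf x := by
  rw [stdPdf]; positivity

lemma stdPdf_nonneg (x : ℝ) : 0 ≤ stdPdf x := (stdPdf_pos x).le

lemma stdPdf_even (x : ℝ) : stdPdf (-x) = stdPdf x := by rw [stdPdf, stdPdf, neg_sq]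

lemma continuous_stdPdf : Continuous stdPdf := by
  unfold stdPdf; fun_prop

lemma stdPdf_le (x : ℝ) : stdPdf x ≤ (Real.sqrt (2 * Real.pi))⁻¹ := by
  rw [stdPdf_eq]
  have h1 : Real.exp (-(1/2) * x ^ 2) ≤ 1 := Real.exp_le_one_iff.2 (by nlinarith [sq_nonneg x])
  calc (Real.sqrt (2 * Real.pi))⁻¹ * Real.exp (-(1/2) * x ^ 2)
      ≤ (Real.sqrt (2 * Real.pi))⁻¹ * 1 := by
        exact mul_le_mul_of_nonneg_left h1 (by positivity)
    _ = _ := mul_one _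

lemma stdPdf_funext : stdPdf = fun x => (Real.sqrt (2 * Real.pi))⁻¹ * Real.exp (-(1/2) * x ^ 2) :=
  funext stdPdf_eq

lemma integrable_stdPdf : Integrable stdPdf := by
  rw [stdPdf_funext]
  exact (integrable_exp_neg_mul_sq (by norm_num : (0:ℝ) < 1/2)).const_mul _

lemma integral_stdPdf : ∫ x, stdPdf x = 1 := by
  simp_rw [stdPdf_eq]
  rw [integral_const_mul, integral_gaussian]
  rw [← Real.sqrt_inv, ← Real.sqrt_mul (by positivity)]
  rw [show (2 * Real.pi)⁻¹ * (Real.pi / (1/2)) = 1 by field_simp]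
  simp

lemma integrable_abs_mul_stdPdf : Integrable (fun x => |x| * stdPdf x) := by
  simp_rw [stdPdf_eq, ← mul_assoc, mul_comm _ (Real.sqrt (2*Real.pi))⁻¹, mul_assoc]
  refine Integrable.const_mul ?_ _
  have := integrable_rpow_mul_exp_neg_mul_sq (by norm_num : (0:ℝ) < 1/2) (by norm_num : (-1:ℝ) < 1)
  simp only [Real.rpow_one] at this
  have h2 := this.abs
  refine h2.congr (Eventually.of_forall fun x => ?_)
  show |x * Real.exp (-(1/2) * x ^ 2)| = _
  rw [abs_mul, abs_of_nonneg (Real.exp_pos _).le]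

lemma hasDerivAt_stdPdf (x : ℝ) : HasDerivAt stdPdf (-x * stdPdf x) x := by
  have h : HasDerivAt (fun x : ℝ => Real.exp (-(x ^ 2) / 2)) (-x * Real.exp (-(x^2)/2)) x := by
    have h1 : HasDerivAt (fun x : ℝ => -(x ^ 2) / 2) (-x) x := by
      have := ((hasDerivAt_pow 2 x).neg).div_const 2
      exact this.congr_deriv (by simp; ring)
    have := h1.exp
    convert this using 1
    ring
  have h2 := h.div_const (Real.sqrt (2 * Real.pi))
  have h3 : -x * stdPdf x = -x * Real.exp (-(x ^ 2) / 2) / Real.sqrt (2 * Real.pi) := by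
    rw [stdPdf]; ring
  rw [h3]; exact h2

lemma tendsto_stdPdf_atTop : Tendsto stdPdf atTop (nhds 0) := by
  have h1 : Tendsto (fun x : ℝ => -(x ^ 2) / 2) atTop atBot := by
    apply Tendsto.atBot_div_const (by norm_num)
    exact tendsto_neg_atTop_atBot.comp (tendsto_pow_atTop (by norm_num))
  have := (Real.tendsto_exp_atBot).comp h1
  unfold stdPdf
  simpa using this.div_const (Real.sqrt (2 * Real.pi))

lemma tendsto_stdPdf_atBot : Tendsto stdPdf atBot (nhds 0) := by
  have := tendsto_stdPdf_atTop.comp tendsto_neg_atBot_atTop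
  refine this.congr fun x => ?_
  simp [Function.comp, stdPdf_even]

/-- generic integrability: functions bounded by affine * stdPdf -/
lemma integrable_of_le_affine {g : ℝ → ℝ} (hm : AEStronglyMeasurable g volume)
    {C₁ C₂ : ℝ} (hg : ∀ x, |g x| ≤ (C₁ * |x| + C₂) * stdPdf x) : Integrable g := by
  refine Integrable.mono' ?_ hm (Eventually.of_forall fun x => by
    simpa [Real.norm_eq_abs] using hg x)
  exact ((integrable_abs_mul_stdPdf.const_mul C₁).add (integrable_stdPdf.const_mul C₂)).congr
    (Eventually.of_forall fun x => by simp only [Pi.add_apply]; ring)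

lemma stdCdf_nonneg (x : ℝ) : 0 ≤ stdCdf x :=
  setIntegral_nonneg measurableSet_Iic fun t _ => stdPdf_nonneg t

lemma stdCdf_le_one (x : ℝ) : stdCdf x ≤ 1 := by
  rw [← integral_stdPdf]
  exact setIntegral_le_integral integrable_stdPdf (Eventually.of_forall fun t => stdPdf_nonneg t)

lemma stdCdf_eq (x : ℝ) : stdCdf x = stdCdf 0 + ∫ t in (0:ℝ)..x, stdPdf t := by
  rw [← intervalIntegral.integral_Iic_sub_Iic integrable_stdPdf.integrableOn
    integrable_stdPdf.integrableOn]
  unfold stdCdf; ring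

lemma hasDerivAt_stdCdf (x : ℝ) : HasDerivAt stdCdf (stdPdf x) x := by
  have h : HasDerivAt (fun u => ∫ t in (0:ℝ)..u, stdPdf t) (stdPdf x) x :=
    intervalIntegral.integral_hasDerivAt_right
      integrable_stdPdf.intervalIntegrable
      (continuous_stdPdf.stronglyMeasurableAtFilter _ _)
      continuous_stdPdf.continuousAt
  have h2 := h.const_add (stdCdf 0)
  refine h2.congr_of_eventuallyEq (Eventually.of_forall fun y => (stdCdf_eq y))

lemma stdCdf_neg (x : ℝ) : stdCdf (-x) = 1 - stdCdf x := by
  have h1 : stdCdf (-x) = ∫ t in Ioi x, stdPdf t := by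
    rw [stdCdf, ← integral_comp_neg_Ioi]
    exact setIntegral_congr_fun measurableSet_Ioi fun t _ => by
      rw [stdPdf_even]
  have h2 : stdCdf x + ∫ t in Ioi x, stdPdf t = 1 := by
    rw [← integral_stdPdf, stdCdf]
    rw [← setIntegral_union (Iic_disjoint_Ioi le_rfl) measurableSet_Ioi
      integrable_stdPdf.integrableOn integrable_stdPdf.integrableOn]
    rw [Iic_union_Ioi, setIntegral_univ]
  linarith

lemma stdCdf_zero : stdCdf 0 = 1/2 := by
  have := stdCdf_neg 0
  rw [neg_zero] at this; linarith

lemma integral_id_mul_stdPdf : ∫ x, x * stdPdf x = 0 := by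
  have h1 : ∫ x, -x * stdPdf (-x) = ∫ x, x * stdPdf x :=
    integral_neg_eq_self (fun y => y * stdPdf y) _
  have h2 : ∀ x : ℝ, -x * stdPdf (-x) = -(x * stdPdf x) := fun x => by
    rw [stdPdf_even]; ring
  simp_rw [h2, integral_neg] at h1
  linarith

lemma integral_Iic_neg_mul_stdPdf (a : ℝ) : ∫ t in Iic a, (-t) * stdPdf t = stdPdf a := by
  have := integral_Iic_of_hasDerivAt_of_tendsto' (a := a)
    (f := stdPdf) (f' := fun t => -t * stdPdf t)
    (fun t _ => hasDerivAt_stdPdf t)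
    (by
      refine (integrable_of_le_affine ?_ (C₁ := 1) (C₂ := 0) fun x => ?_).integrableOn
      · exact (continuous_id.neg.mul continuous_stdPdf).aestronglyMeasurable
      · rw [abs_mul, abs_neg, one_mul, add_zero, abs_of_nonneg (stdPdf_nonneg x)])
    tendsto_stdPdf_atBot
  simpa using this


lemma continuous_stdCdf : Continuous stdCdf :=
  continuous_iff_continuousAt.2 fun x => (hasDerivAt_stdCdf x).continuousAt


lemma integrable_max_sub_mul (a : ℝ) : Integrable (fun t => max (a - t) 0 * stdPdf t) := by
  refine integrable_of_le_affine ?_ (C₁ := 1) (C₂ := |a|) fun t => ?_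
  · exact ((continuous_const.sub continuous_id).max continuous_const).mul
      continuous_stdPdf |>.aestronglyMeasurable
  · rw [abs_mul, abs_of_nonneg (stdPdf_nonneg t)]
    refine mul_le_mul_of_nonneg_right ?_ (stdPdf_nonneg t)
    rw [abs_of_nonneg (le_max_right _ _)]
    rcases le_total (a - t) 0 with hc | hc
    · rw [max_eq_right hc]; positivity
    · rw [max_eq_left hc]
      calc a - t ≤ |a| + |t| := by
            have := abs_nonneg a; have := neg_abs_le a; have := neg_abs_le t
            have := le_abs_self a; have := le_abs_self t; linarith
        _ = 1 * |t| + |a| := by ring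

lemma integrable_id_mul_stdPdf : Integrable (fun t : ℝ => t * stdPdf t) := by
  refine integrable_of_le_affine ?_ (C₁ := 1) (C₂ := 0) fun t => ?_
  · exact (continuous_id.mul continuous_stdPdf).aestronglyMeasurable
  · rw [abs_mul, abs_of_nonneg (stdPdf_nonneg t), one_mul, add_zero]

lemma IA2 (a : ℝ) : ∫ t, max (a - t) 0 * stdPdf t = stdPdf a + a * stdCdf a := by
  rw [← setIntegral_eq_integral_of_forall_compl_eq_zero
    (s := Iic a) (fun t ht => by
      rw [max_eq_right, zero_mul]
      simp only [mem_Iic, not_le] at ht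
      linarith)]
  rw [setIntegral_congr_fun measurableSet_Iic
    (g := fun t => a * stdPdf t + (-t) * stdPdf t) (fun t ht => by
      rw [max_eq_left (by simp only [mem_Iic] at ht; linarith)]; ring)]
  rw [integral_add ((integrable_stdPdf.const_mul a).integrableOn)
    ((integrable_id_mul_stdPdf.neg.congr (Eventually.of_forall fun t => by simp only [Pi.neg_apply]; ring)).integrableOn)]
  rw [MeasureTheory.integral_const_mul, integral_Iic_neg_mul_stdPdf]
  rw [stdCdf]; ring

lemma IA1 (a : ℝ) : ∫ t, max (t - a) 0 * stdPdf t = stdPdf a + a * stdCdf a - a := by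
  have key : ∀ t : ℝ, max (t - a) 0 * stdPdf t
      = max (a - t) 0 * stdPdf t + (t * stdPdf t + (-a) * stdPdf t) := by
    intro t
    rcases le_total t a with hc | hc
    · rw [max_eq_right (by linarith), max_eq_left (by linarith)]; ring
    · rw [max_eq_left (by linarith), max_eq_right (by linarith)]; ring
  simp_rw [key]
  have hconst : Integrable (fun t : ℝ => -a * stdPdf t) := integrable_stdPdf.const_mul (-a)
  have hsum : Integrable (fun t : ℝ => t * stdPdf t + -a * stdPdf t) :=
    integrable_id_mul_stdPdf.add hconst
  rw [integral_add (integrable_max_sub_mul a) hsum,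
    integral_add integrable_id_mul_stdPdf hconst,
    IA2, integral_id_mul_stdPdf, MeasureTheory.integral_const_mul, integral_stdPdf]
  ring


lemma sq_sqrt_one_add_sq (s : ℝ) : Real.sqrt (1 + s^2) ^ 2 = 1 + s^2 :=
  Real.sq_sqrt (by positivity)

lemma sqrt_one_add_sq_pos (s : ℝ) : 0 < Real.sqrt (1 + s^2) :=
  Real.sqrt_pos.2 (by positivity)

lemma B1 (s m : ℝ) : ∫ u, stdPdf u * stdPdf (s*u+m)
    = stdPdf (m / Real.sqrt (1+s^2)) / Real.sqrt (1+s^2) := by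
  have hne : (1+s^2 : ℝ) ≠ 0 := by positivity
  have h2pi : Real.sqrt (2*Real.pi) * Real.sqrt (2*Real.pi) = 2*Real.pi :=
    Real.mul_self_sqrt (by positivity)
  have key : ∀ u : ℝ, stdPdf u * stdPdf (s*u+m)
      = (Real.exp (-(m^2) / (2*(1+s^2))) / (2*Real.pi))
          * Real.exp (-((1+s^2)/2) * (u + s*m/(1+s^2))^2) := by
    intro u
    unfold stdPdf
    rw [div_mul_div_comm, h2pi, ← Real.exp_add, div_mul_eq_mul_div, ← Real.exp_add]
    congr 1
    congr 1
    field_simp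
    ring
  simp_rw [key]
  rw [MeasureTheory.integral_const_mul]
  have hshift : ∫ u : ℝ, Real.exp (-((1+s^2)/2) * (u + s*m/(1+s^2))^2)
      = ∫ u : ℝ, Real.exp (-((1+s^2)/2) * u^2) :=
    integral_add_right_eq_self (fun v => Real.exp (-((1+s^2)/2) * v^2)) _
  rw [hshift, integral_gaussian]
  have h1 : Real.pi / ((1+s^2)/2) = (2*Real.pi) / (1+s^2) := by field_simp
  rw [h1, Real.sqrt_div (by positivity : (0:ℝ) ≤ 2*Real.pi)]
  unfold stdPdf
  rw [div_pow, sq_sqrt_one_add_sq]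
  rw [show -(m ^ 2 / (1 + s ^ 2)) / 2 = -(m^2) / (2*(1+s^2)) by field_simp]
  rw [eq_div_iff (sqrt_one_add_sq_pos s).ne']
  field_simp
  have e2 : Real.sqrt 2 * Real.sqrt 2 = 2 := Real.mul_self_sqrt (by norm_num)
  have epi : Real.sqrt Real.pi * Real.sqrt Real.pi = Real.pi := Real.mul_self_sqrt Real.pi_pos.le
  have hkey : (Real.sqrt 2 * Real.sqrt Real.pi) * (Real.sqrt 2 * Real.sqrt Real.pi)
      = 2 * Real.pi := by rw [show (Real.sqrt 2 * Real.sqrt Real.pi) * (Real.sqrt 2 * Real.sqrt Real.pi)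
        = (Real.sqrt 2 * Real.sqrt 2) * (Real.sqrt Real.pi * Real.sqrt Real.pi) by ring, e2, epi]
  linear_combination h2pi

lemma stdCdf_abs_le_one (x : ℝ) : |stdCdf x| ≤ 1 :=
  abs_le.2 ⟨by linarith [stdCdf_nonneg x], stdCdf_le_one x⟩

lemma hasDerivAt_stdCdf_affine (s m u : ℝ) :
    HasDerivAt (fun u => stdCdf (s*u+m)) (s * stdPdf (s*u+m)) u := by
  have h1 : HasDerivAt (fun u : ℝ => s*u+m) s u := by
    simpa using ((hasDerivAt_id u).const_mul s).add_const m
  have := (hasDerivAt_stdCdf (s*u+m)).comp u h1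
  rw [mul_comm] at this
  exact this

lemma integrable_pdf_mul_pdf (s m : ℝ) : Integrable (fun u => stdPdf u * stdPdf (s*u+m)) := by
  refine integrable_of_le_affine ?_ (C₁ := 0) (C₂ := (Real.sqrt (2*Real.pi))⁻¹) fun u => ?_
  · exact (continuous_stdPdf.mul (continuous_stdPdf.comp
      ((continuous_const.mul continuous_id).add continuous_const))).aestronglyMeasurable
  · rw [abs_mul, abs_of_nonneg (stdPdf_nonneg _), abs_of_nonneg (stdPdf_nonneg _),
      zero_mul, zero_add, mul_comm ((Real.sqrt (2*Real.pi))⁻¹) (stdPdf u)]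
    exact mul_le_mul_of_nonneg_left (stdPdf_le _) (stdPdf_nonneg u)

lemma integrable_pdf_mul_cdf (s m : ℝ) : Integrable (fun u => stdPdf u * stdCdf (s*u+m)) := by
  refine integrable_of_le_affine ?_ (C₁ := 0) (C₂ := 1) fun u => ?_
  · exact (continuous_stdPdf.mul (continuous_stdCdf.comp
      ((continuous_const.mul continuous_id).add continuous_const))).aestronglyMeasurable
  · rw [abs_mul, abs_of_nonneg (stdPdf_nonneg _), zero_mul, zero_add, one_mul,
      mul_comm]
    exact (mul_le_mul_of_nonneg_right (stdCdf_abs_le_one _) (stdPdf_nonneg u)).trans_eq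
      (one_mul _)

lemma integrable_id_mul_pdf_mul_cdf (s m : ℝ) :
    Integrable (fun u => u * stdPdf u * stdCdf (s*u+m)) := by
  refine integrable_of_le_affine ?_ (C₁ := 1) (C₂ := 0) fun u => ?_
  · exact ((continuous_id.mul continuous_stdPdf).mul (continuous_stdCdf.comp
      ((continuous_const.mul continuous_id).add continuous_const))).aestronglyMeasurable
  · rw [abs_mul, abs_mul, abs_of_nonneg (stdPdf_nonneg _), one_mul, add_zero]
    calc |u| * stdPdf u * |stdCdf (s*u+m)| ≤ |u| * stdPdf u * 1 := by
          exact mul_le_mul_of_nonneg_left (stdCdf_abs_le_one _) (mul_nonneg (abs_nonneg u) (stdPdf_nonneg u))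
      _ = |u| * stdPdf u := mul_one _

/-- Stein-type identity. -/
lemma B3 (s m : ℝ) : ∫ u, u * stdPdf u * stdCdf (s*u+m)
    = s * (stdPdf (m / Real.sqrt (1+s^2)) / Real.sqrt (1+s^2)) := by
  have hderiv : ∀ u : ℝ, HasDerivAt (fun u => -stdPdf u * stdCdf (s*u+m))
      (u * stdPdf u * stdCdf (s*u+m) - s * (stdPdf u * stdPdf (s*u+m))) u := by
    intro u
    have h := ((hasDerivAt_stdPdf u).neg).mul (hasDerivAt_stdCdf_affine s m u)
    exact h.congr_deriv (by simp only [Pi.neg_apply]; ring)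
  have hint : Integrable (fun u => u * stdPdf u * stdCdf (s*u+m)
      - s * (stdPdf u * stdPdf (s*u+m))) :=
    (integrable_id_mul_pdf_mul_cdf s m).sub ((integrable_pdf_mul_pdf s m).const_mul s)
  have hb : Tendsto (fun u => -stdPdf u * stdCdf (s*u+m)) atBot (nhds 0) := by
    refine squeeze_zero_norm (fun u => ?_) tendsto_stdPdf_atBot
    rw [norm_mul, norm_neg, Real.norm_eq_abs, Real.norm_eq_abs,
      abs_of_nonneg (stdPdf_nonneg _)]
    calc stdPdf u * |stdCdf (s*u+m)| ≤ stdPdf u * 1 :=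
          mul_le_mul_of_nonneg_left (stdCdf_abs_le_one _) (stdPdf_nonneg u)
      _ = stdPdf u := mul_one _
  have ht : Tendsto (fun u => -stdPdf u * stdCdf (s*u+m)) atTop (nhds 0) := by
    refine squeeze_zero_norm (fun u => ?_) tendsto_stdPdf_atTop
    rw [norm_mul, norm_neg, Real.norm_eq_abs, Real.norm_eq_abs,
      abs_of_nonneg (stdPdf_nonneg _)]
    calc stdPdf u * |stdCdf (s*u+m)| ≤ stdPdf u * 1 :=
          mul_le_mul_of_nonneg_left (stdCdf_abs_le_one _) (stdPdf_nonneg u)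
      _ = stdPdf u := mul_one _
  have h0 := integral_of_hasDerivAt_of_tendsto hderiv hint hb ht
  rw [sub_zero] at h0
  have hsplit := integral_sub (integrable_id_mul_pdf_mul_cdf s m)
    ((integrable_pdf_mul_pdf s m).const_mul s)
  rw [h0] at hsplit
  have hmul : ∫ u, s * (stdPdf u * stdPdf (s*u+m))
      = s * ∫ u, stdPdf u * stdPdf (s*u+m) := integral_const_mul s _
  rw [B1] at hmul
  linarith [hsplit, hmul]

/-- Gaussian cdf convolution identity. -/
lemma B2 (s m : ℝ) : ∫ u, stdPdf u * stdCdf (s*u+m)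
    = stdCdf (m / Real.sqrt (1+s^2)) := by
  set F : ℝ → ℝ := fun m => ∫ u, stdPdf u * stdCdf (s*u+m) with hF
  set Gf : ℝ → ℝ := fun m => stdCdf (m / Real.sqrt (1+s^2)) with hG
  have hFderiv : ∀ m0 : ℝ, HasDerivAt F
      (stdPdf (m0 / Real.sqrt (1+s^2)) / Real.sqrt (1+s^2)) m0 := by
    intro m0
    have key := hasDerivAt_integral_of_dominated_loc_of_deriv_le
      (F := fun (m : ℝ) (u : ℝ) => stdPdf u * stdCdf (s*u+m))
      (F' := fun (m : ℝ) (u : ℝ) => stdPdf u * stdPdf (s*u+m))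
      (x₀ := m0) (s := Metric.ball m0 1) (bound := fun u => (Real.sqrt (2*Real.pi))⁻¹ * stdPdf u)
      (Metric.ball_mem_nhds m0 one_pos)
      (Eventually.of_forall fun m => (continuous_stdPdf.mul (continuous_stdCdf.comp
        ((continuous_const.mul continuous_id).add continuous_const))).aestronglyMeasurable)
      (integrable_pdf_mul_cdf s m0)
      ((continuous_stdPdf.mul (continuous_stdPdf.comp
        ((continuous_const.mul continuous_id).add continuous_const))).aestronglyMeasurable)
      (Eventually.of_forall fun u => fun m _ => by
        rw [Real.norm_eq_abs, abs_mul, abs_of_nonneg (stdPdf_nonneg _),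
          abs_of_nonneg (stdPdf_nonneg _), mul_comm]
        exact mul_le_mul_of_nonneg_right (stdPdf_le _) (stdPdf_nonneg u))
      (integrable_stdPdf.const_mul _)
      (Eventually.of_forall fun u => fun m _ => by
        have h1 : HasDerivAt (fun m : ℝ => s*u+m) 1 m := by
          simpa using (hasDerivAt_id m).const_add (s*u)
        have h2 := ((hasDerivAt_stdCdf (s*u+m)).comp m h1).const_mul (stdPdf u)
        simpa using h2)
    have := key.2
    rwa [B1] at this
  have hGderiv : ∀ m0 : ℝ, HasDerivAt Gf
      (stdPdf (m0 / Real.sqrt (1+s^2)) / Real.sqrt (1+s^2)) m0 := by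
    intro m0
    have h1 : HasDerivAt (fun m : ℝ => m / Real.sqrt (1+s^2))
        (Real.sqrt (1+s^2))⁻¹ m0 := by
      simpa using (hasDerivAt_id m0).div_const (Real.sqrt (1+s^2))
    have h2 := (hasDerivAt_stdCdf (m0 / Real.sqrt (1+s^2))).comp m0 h1
    exact h2.congr_deriv (div_eq_mul_inv _ _).symm
  -- F - Gf has zero derivative, hence constant
  have hdiff : ∀ m0 : ℝ, HasDerivAt (fun m => F m - Gf m) 0 m0 := by
    intro m0
    have := (hFderiv m0).sub (hGderiv m0)
    rw [sub_self] at this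
    exact this
  have hconst : ∀ m0 : ℝ, F m0 - Gf m0 = F 0 - Gf 0 := by
    intro m0
    exact is_const_of_deriv_eq_zero (fun x => (hdiff x).differentiableAt)
      (fun x => (hdiff x).deriv) m0 0
  -- evaluate at 0
  have hF0 : F 0 = 1/2 := by
    have hrefl : F 0 = ∫ u, stdPdf u * stdCdf (-(s*u)) := by
      simp only [hF]
      have := integral_neg_eq_self (fun u => stdPdf u * stdCdf (s*u+0)) (volume : Measure ℝ)
      rw [← this]
      congr 1
      funext u
      rw [stdPdf_even]
      norm_num
    have hsum : F 0 + F 0 = ∫ u, stdPdf u := by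
      nth_rewrite 2 [hrefl]
      simp only [hF]
      rw [← integral_add (integrable_pdf_mul_cdf s 0)]
      · congr 1
        funext u
        rw [add_zero, stdCdf_neg]
        ring
      · refine integrable_of_le_affine ?_ (C₁ := 0) (C₂ := 1) fun u => ?_
        · exact (continuous_stdPdf.mul (continuous_stdCdf.comp
            ((continuous_const.mul continuous_id).neg))).aestronglyMeasurable
        · rw [abs_mul, abs_of_nonneg (stdPdf_nonneg _), zero_mul, zero_add, one_mul, mul_comm]
          exact (mul_le_mul_of_nonneg_right (stdCdf_abs_le_one _) (stdPdf_nonneg u)).trans_eq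
            (one_mul _)
    rw [integral_stdPdf] at hsum
    linarith
  have hG0 : Gf 0 = 1/2 := by
    rw [hG]
    simp only [zero_div]
    exact stdCdf_zero
  have := hconst m
  rw [hF0, hG0] at this
  have : F m = Gf m := by linarith
  exact this

lemma integrable_max_sub_mul' (a : ℝ) : Integrable (fun t => max (t - a) 0 * stdPdf t) := by
  have key : ∀ t : ℝ, max (t - a) 0 * stdPdf t
      = max (a - t) 0 * stdPdf t + (t * stdPdf t + (-a) * stdPdf t) := by
    intro t
    rcases le_total t a with hc | hc
    · rw [max_eq_right (by linarith), max_eq_left (by linarith)]; ring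
    · rw [max_eq_left (by linarith), max_eq_right (by linarith)]; ring
  have : Integrable (fun t => max (a - t) 0 * stdPdf t
      + (t * stdPdf t + (-a) * stdPdf t)) :=
    (integrable_max_sub_mul a).add (integrable_id_mul_stdPdf.add
      (integrable_stdPdf.const_mul (-a)))
  exact this.congr (Eventually.of_forall fun t => (key t).symm)

lemma my_integral_gaussianReal {μ : ℝ} {v : NNReal} (hv : v ≠ 0) (f : ℝ → ℝ) :
    ∫ x, f x ∂(gaussianReal μ v) = ∫ x, gaussianPDFReal μ v x * f x := by
  rw [gaussianReal_of_var_ne_zero _ hv]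
  have h := integral_withDensity_eq_integral_smul (μ := (volume : Measure ℝ))
    (f := fun x => Real.toNNReal (gaussianPDFReal μ v x))
    ((measurable_gaussianPDFReal μ v).real_toNNReal) f
  have heq : (volume.withDensity fun x => ((Real.toNNReal (gaussianPDFReal μ v x) : NNReal) : ENNReal))
      = volume.withDensity (gaussianPDF μ v) := rfl
  rw [heq] at h
  rw [h]
  congr 1
  funext x
  rw [NNReal.smul_def, smul_eq_mul, Real.coe_toNNReal _ (gaussianPDFReal_nonneg μ v x)]

lemma gaussianPDFReal_shift_scale {θ : ℝ} {σ : NNReal} (hσ : σ ≠ 0) (u : ℝ) :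
    gaussianPDFReal θ σ (Real.sqrt σ * u + θ) = stdPdf u / Real.sqrt σ := by
  have hσpos : (0:ℝ) < σ := lt_of_le_of_ne σ.coe_nonneg (by exact_mod_cast hσ.symm)
  rw [gaussianPDFReal, stdPdf]
  rw [show Real.sqrt σ * u + θ - θ = Real.sqrt σ * u by ring]
  rw [mul_pow, Real.sq_sqrt σ.coe_nonneg]
  rw [show (2 * Real.pi * σ : ℝ) = (2 * Real.pi) * σ by ring,
    Real.sqrt_mul (by positivity) (σ:ℝ)]
  rw [show -((σ:ℝ) * u^2) / (2*σ) = -(u^2)/2 by field_simp]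
  field_simp

lemma integral_gaussianReal_substitute {θ : ℝ} {σ : NNReal} (hσ : σ ≠ 0) (W : ℝ → ℝ) :
    ∫ x, W x ∂(gaussianReal θ σ) = ∫ u, stdPdf u * W (Real.sqrt σ * u + θ) := by
  have hσpos : (0:ℝ) < σ := lt_of_le_of_ne σ.coe_nonneg (by exact_mod_cast hσ.symm)
  have hsp : (0:ℝ) < Real.sqrt σ := Real.sqrt_pos.2 hσpos
  rw [my_integral_gaussianReal hσ]
  have h1 : ∫ x, gaussianPDFReal θ σ x * W x
      = ∫ x, gaussianPDFReal θ σ (x + θ) * W (x + θ) :=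
    (integral_add_right_eq_self (fun x => gaussianPDFReal θ σ x * W x) θ).symm
  have h2 := Measure.integral_comp_mul_left
    (fun x => gaussianPDFReal θ σ (x + θ) * W (x + θ)) (Real.sqrt σ)
  rw [abs_of_pos (inv_pos.2 hsp), smul_eq_mul] at h2
  have h3 : ∀ u : ℝ, gaussianPDFReal θ σ (Real.sqrt σ * u + θ) * W (Real.sqrt σ * u + θ)
      = (Real.sqrt σ)⁻¹ * (stdPdf u * W (Real.sqrt σ * u + θ)) := by
    intro u
    rw [gaussianPDFReal_shift_scale hσ]
    field_simp
  simp_rw [h3] at h2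
  rw [integral_const_mul] at h2
  have h4 := mul_left_cancel₀ (inv_ne_zero hsp.ne') h2
  rw [h1, ← h4]

lemma inner_eq (b h θ q : ℝ) :
    (∫ y, (b * max (y - q) 0 + h * max (q - y) 0) ∂(gaussianReal θ 1))
      = (b+h) * (stdPdf (q-θ) + (q-θ) * stdCdf (q-θ)) - b*(q-θ) := by
  rw [integral_gaussianReal_substitute one_ne_zero]
  have h1 : ∀ u : ℝ, stdPdf u * (b * max (Real.sqrt ((1:NNReal):ℝ) * u + θ - q) 0
        + h * max (q - (Real.sqrt ((1:NNReal):ℝ) * u + θ)) 0)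
      = b * (max (u - (q-θ)) 0 * stdPdf u) + h * (max ((q-θ) - u) 0 * stdPdf u) := by
    intro u
    rw [NNReal.coe_one, Real.sqrt_one, one_mul]
    rw [show u + θ - q = u - (q-θ) by ring, show q - (u+θ) = (q-θ) - u by ring]
    ring
  simp_rw [h1]
  rw [integral_add ((integrable_max_sub_mul' _).const_mul b)
    ((integrable_max_sub_mul _).const_mul h), integral_const_mul, integral_const_mul, IA1, IA2]
  ring

lemma outer_eq (b h s m : ℝ) :
    ∫ u, stdPdf u * ((b+h)*(stdPdf (s*u+m) + (s*u+m)*stdCdf (s*u+m)) - b*(s*u+m))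
      = (b+h) * ((1+s^2) * (stdPdf (m/Real.sqrt (1+s^2)) / Real.sqrt (1+s^2))
          + m * stdCdf (m/Real.sqrt (1+s^2))) - b*m := by
  have hexp : ∀ u : ℝ,
      stdPdf u * ((b+h)*(stdPdf (s*u+m) + (s*u+m)*stdCdf (s*u+m)) - b*(s*u+m))
      = ((b+h)*(stdPdf u * stdPdf (s*u+m))
          + ((b+h)*s)*(u * stdPdf u * stdCdf (s*u+m)))
        + (((b+h)*m)*(stdPdf u * stdCdf (s*u+m))
          + ((-(b*s))*(u * stdPdf u) + (-(b*m))*(stdPdf u))) := by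
    intro u; ring
  simp_rw [hexp]
  have i1 : Integrable (fun u => (b+h)*(stdPdf u * stdPdf (s*u+m))) :=
    (integrable_pdf_mul_pdf s m).const_mul _
  have i2 : Integrable (fun u => ((b+h)*s)*(u * stdPdf u * stdCdf (s*u+m))) :=
    (integrable_id_mul_pdf_mul_cdf s m).const_mul _
  have i3 : Integrable (fun u => ((b+h)*m)*(stdPdf u * stdCdf (s*u+m))) :=
    (integrable_pdf_mul_cdf s m).const_mul _
  have i4 : Integrable (fun u => (-(b*s))*(u * stdPdf u)) :=
    integrable_id_mul_stdPdf.const_mul _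
  have i5 : Integrable (fun u => (-(b*m))*(stdPdf u)) :=
    integrable_stdPdf.const_mul _
  have i45 : Integrable (fun u => (-(b*s))*(u * stdPdf u) + (-(b*m))*(stdPdf u)) := i4.add i5
  have i345 : Integrable (fun u => ((b+h)*m)*(stdPdf u * stdCdf (s*u+m))
      + ((-(b*s))*(u * stdPdf u) + (-(b*m))*(stdPdf u))) := i3.add i45
  have i12 : Integrable (fun u => (b+h)*(stdPdf u * stdPdf (s*u+m))
      + ((b+h)*s)*(u * stdPdf u * stdCdf (s*u+m))) := i1.add i2
  rw [integral_add i12 i345, integral_add i1 i2, integral_add i3 i45, integral_add i4 i5]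
  rw [integral_const_mul, integral_const_mul, integral_const_mul, integral_const_mul,
    integral_const_mul, B1, B2, B3, integral_id_mul_stdPdf, integral_stdPdf]
  have hr2 := sq_sqrt_one_add_sq s
  have hrpos := sqrt_one_add_sq_pos s
  field_simp
  ring


set_option maxHeartbeats 1000000 in
theorem stmt18 (σp : NNReal) (hσp : 0 < σp) (α η θ b h : ℝ)
    (hα : α ∈ Set.Icc (0 : ℝ) 1) (hb : 0 < b) (hh : 0 < h) :
    ∀ bt : ℝ, bt = b / (b + h) →
    ∀ qhat : ℝ → ℝ, (qhat = fun x : ℝ =>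
        α * x + (1 - α) * η + Real.sqrt (1 + α * (σp : ℝ)) * stdQuantile bt) →
    ∀ c d : ℝ,
      c = Real.sqrt ((1 + α * (σp : ℝ)) / (1 + α ^ 2 * (σp : ℝ))) * stdQuantile bt →
      d = -(1 - α) / Real.sqrt (1 + α ^ 2 * (σp : ℝ)) →
    (∫ x, (∫ y, (b * max (y - qhat x) 0 + h * max (qhat x - y) 0) ∂(gaussianReal θ 1))
        ∂(gaussianReal θ σp))
      = (b + h) * Real.sqrt (1 + α ^ 2 * (σp : ℝ)) * G (c + d * (θ - η)) bt := by
  intro bt hbt qhat hqhat c d hc hd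
  have hα0 := hα.1
  have hbh : (0:ℝ) < b + h := by linarith
  have hσpR : (0:ℝ) < (σp:ℝ) := hσp
  have hsp2 : Real.sqrt (σp:ℝ) ^ 2 = (σp:ℝ) := Real.sq_sqrt σp.coe_nonneg
  -- notation
  set z : ℝ := stdQuantile bt with hz
  set s : ℝ := α * Real.sqrt (σp:ℝ) with hs
  set m : ℝ := Real.sqrt (1 + α*(σp:ℝ)) * z - (1-α)*(θ-η) with hm
  have hs2 : 1 + s^2 = 1 + α^2*(σp:ℝ) := by rw [hs, mul_pow, hsp2]
  have hrpos : 0 < Real.sqrt (1+s^2) := sqrt_one_add_sq_pos s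
  have hr2 : Real.sqrt (1+s^2) ^ 2 = 1 + s^2 := sq_sqrt_one_add_sq s
  -- step 1: rewrite inner integral
  have step1 : (∫ x, (∫ y, (b * max (y - qhat x) 0 + h * max (qhat x - y) 0)
        ∂(gaussianReal θ 1)) ∂(gaussianReal θ σp))
      = ∫ x, ((b+h) * (stdPdf (qhat x-θ) + (qhat x-θ) * stdCdf (qhat x-θ)) - b*(qhat x-θ))
        ∂(gaussianReal θ σp) :=
    integral_congr_ae (Filter.Eventually.of_forall fun x => inner_eq b h θ (qhat x))
  rw [step1, integral_gaussianReal_substitute hσp.ne']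
  have hq : ∀ u : ℝ, qhat (Real.sqrt (σp:ℝ) * u + θ) - θ = s*u + m := by
    intro u
    rw [hqhat]
    simp only
    ring
  have hintegrand : ∀ u : ℝ,
      stdPdf u * ((b+h) * (stdPdf (qhat (Real.sqrt (σp:ℝ) * u + θ)-θ)
          + (qhat (Real.sqrt (σp:ℝ) * u + θ)-θ) * stdCdf (qhat (Real.sqrt (σp:ℝ) * u + θ)-θ))
        - b*(qhat (Real.sqrt (σp:ℝ) * u + θ)-θ))
      = stdPdf u * ((b+h)*(stdPdf (s*u+m) + (s*u+m)*stdCdf (s*u+m)) - b*(s*u+m)) := by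
    intro u
    rw [hq u]
  simp_rw [hintegrand]
  rw [outer_eq]
  -- step 2: identify the argument
  have hw : c + d * (θ - η) = m / Real.sqrt (1+s^2) := by
    rw [hc, hd, hs2]
    rw [Real.sqrt_div (by positivity : (0:ℝ) ≤ 1 + α*(σp:ℝ))]
    field_simp
    rw [hm]
    ring
  rw [hw, G, ← hs2, hbt]
  have hbhne : b + h ≠ 0 := hbh.ne'
  have hrne : Real.sqrt (1+s^2) ≠ 0 := hrpos.ne'
  have hr2' : Real.sqrt (1+s^2)^2 = 1 + α^2 * Real.sqrt (σp:ℝ)^2 := by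
    rw [hr2, hs]; ring
  field_simp
  linear_combination (-((b+h) * stdPdf (m / Real.sqrt (1+s^2)))) * hr2
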